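/- Let A be self-adjoint and B symmetric and A-bounded in a Hilbert space, and suppose A + tB (defined on dom(A)) is closed for every t ∈ [0,1]. Then A + B is self-adjoint on dom(A). -/

import Mathlib

open Function Complex


noncomputable section

private lemma core_surj {H : Type*} [NormedAddCommGroup H] [NormedSpace ℂ H] [CompleteSpace H]
    {D : Submodule ℂ H} (T S : D →ₗ[ℂ] H) {c : ℝ} (hc0 : 0 ≤ c) (hc : c < 1)
    (hTbij : Function.Bijective T)
    (hS : ∀ x, ‖S x‖ ≤ c * ‖T x‖) :
    Function.Surjective (T + S) := by
  let e := LinearEquiv.ofBijective T hTbij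
  let U : H →ₗ[ℂ] H := S.comp (e.symm.toLinearMap)
  have hTe : ∀ y : H, T (e.symm y) = y := fun y => e.apply_symm_apply y
  have hU : ∀ y, ‖U y‖ ≤ c * ‖y‖ := by
    intro y
    have := hS (e.symm y)
    rwa [hTe] at this
  let U' : H →L[ℂ] H := U.mkContinuous c hU
  have hU'le : ‖U'‖ ≤ c := LinearMap.mkContinuous_norm_le U hc0 hU
  have hlt : ‖-U'‖ < 1 := by rw [norm_neg]; exact lt_of_le_of_lt hU'le hc
  let u : (H →L[ℂ] H)ˣ := Units.oneSub (-U') hlt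
  intro y
  refine ⟨e.symm ((↑u⁻¹ : H →L[ℂ] H) y), ?_⟩
  have huv : u.val ((↑u⁻¹ : H →L[ℂ] H) y) = y := by
    have := u.mul_inv
    calc u.val ((↑u⁻¹ : H →L[ℂ] H) y) = (u.val * ↑u⁻¹) y := rfl
    _ = y := by rw [this]; rfl
  have hval : u.val = 1 + U' := by
    show (1 : H →L[ℂ] H) - (-U') = 1 + U'
    rw [sub_neg_eq_add]
  set z := (↑u⁻¹ : H →L[ℂ] H) y
  have : (T + S) (e.symm z) = z + U z := by
    simp only [LinearMap.add_apply, hTe]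
    rfl
  rw [this]
  have : z + U z = (1 + U') z := by
    rw [ContinuousLinearMap.add_apply, ContinuousLinearMap.one_apply]
    rfl
  rw [this, ← hval, huv]


set_option maxHeartbeats 2000000 in
set_option synthInstance.maxHeartbeats 400000 in

private lemma graph_norm_bound {H : Type*} [NormedAddCommGroup H] [NormedSpace ℂ H]
    [CompleteSpace H]
    {D : Submodule ℂ H} (A' T' : D →ₗ[ℂ] H) (K : ℝ) (hK : 0 ≤ K)
    (hbd : ∀ x : D, ‖T' x‖ ≤ K * (‖A' x‖ + ‖(x : H)‖))
    (hgA : IsClosed ((LinearMap.range (D.subtype.prod A') : Submodule ℂ (H × H)) : Set (H × H)))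
    (hgT : IsClosed ((LinearMap.range (D.subtype.prod T') : Submodule ℂ (H × H)) : Set (H × H))) :
    ∃ C : ℝ, 0 ≤ C ∧ ∀ x : D, ‖A' x‖ ≤ C * (‖T' x‖ + ‖(x : H)‖) := by
  set γA := D.subtype.prod A' with hγA
  set γT := D.subtype.prod T' with hγT
  have hγAx : ∀ x : D, γA x = ((x : H), A' x) := fun x => rfl
  have hγTx : ∀ x : D, γT x = ((x : H), T' x) := fun x => rfl
  have hinjA : Function.Injective γA := by
    intro x y h
    exact Subtype.ext (congrArg Prod.fst h)
  have hinjT : Function.Injective γT := by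
    intro x y h
    exact Subtype.ext (congrArg Prod.fst h)
  haveI : CompleteSpace (LinearMap.range γA) := hgA.isComplete.completeSpace_coe
  haveI : CompleteSpace (LinearMap.range γT) := hgT.isComplete.completeSpace_coe
  let eA := LinearEquiv.ofInjective γA hinjA
  let eT := LinearEquiv.ofInjective γT hinjT
  let Ψ := eA.symm.trans eT
  have hnormA : ∀ x : D, ‖eA x‖ = max ‖(x : H)‖ ‖A' x‖ := by
    intro x
    have h1 : ‖eA x‖ = ‖(eA x : H × H)‖ := rfl
    rw [h1, LinearEquiv.ofInjective_apply, hγAx, Prod.norm_def]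
  have hnormT : ∀ x : D, ‖eT x‖ = max ‖(x : H)‖ ‖T' x‖ := by
    intro x
    have h1 : ‖eT x‖ = ‖(eT x : H × H)‖ := rfl
    rw [h1, LinearEquiv.ofInjective_apply, hγTx, Prod.norm_def]
  have hΨ : ∀ p, Ψ p = eT (eA.symm p) := fun p => rfl
  have hbound : ∀ p, ‖Ψ.toLinearMap p‖ ≤ (2 * K + 1) * ‖p‖ := by
    intro p
    set x := eA.symm p with hx
    have hpx : eA x = p := eA.apply_symm_apply p
    have h1 : ‖Ψ.toLinearMap p‖ = max ‖(x : H)‖ ‖T' x‖ := by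
      show ‖Ψ p‖ = _
      rw [hΨ, ← hx, hnormT]
    have h2 : ‖p‖ = max ‖(x : H)‖ ‖A' x‖ := by rw [← hpx, hnormA]
    rw [h1, h2]
    have hb := hbd x
    have hx1 : ‖(x : H)‖ ≤ max ‖(x : H)‖ ‖A' x‖ := le_max_left _ _
    have hx2 : ‖A' x‖ ≤ max ‖(x : H)‖ ‖A' x‖ := le_max_right _ _
    have hmax0 : (0:ℝ) ≤ max ‖(x : H)‖ ‖A' x‖ := le_trans (norm_nonneg _) hx1
    apply max_le
    · nlinarith
    · nlinarith
  let Ψc : (LinearMap.range γA) →L[ℂ] (LinearMap.range γT) :=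
    Ψ.toLinearMap.mkContinuous (2 * K + 1) hbound
  have hΨc : ∀ p, Ψc p = Ψ p := fun p => rfl
  have hker : Ψc.ker = ⊥ := by
    have hinjc : Function.Injective Ψc := by
      intro p q h
      rw [hΨc, hΨc] at h
      exact Ψ.injective h
    exact LinearMap.ker_eq_bot_of_injective hinjc
  have hrange : Ψc.range = ⊤ :=
    LinearMap.range_eq_top.2 (by
      intro q
      exact ⟨Ψ.symm q, (hΨc _).trans (Ψ.apply_symm_apply q)⟩)
  let Φ := ContinuousLinearEquiv.ofBijective Ψc hker hrange
  set C := ‖(Φ.symm : (LinearMap.range γT) →L[ℂ] (LinearMap.range γA))‖ with hC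
  refine ⟨C, norm_nonneg _, ?_⟩
  intro x
  have hΦ : Φ (eA x) = eT x := by
    have h1 : Φ (eA x) = Ψc (eA x) := rfl
    rw [h1, hΨc, hΨ, eA.symm_apply_apply]
  have h2 : ‖eA x‖ ≤ C * ‖eT x‖ := by
    have h3 : Φ.symm (eT x) = eA x := by rw [← hΦ, Φ.symm_apply_apply]
    calc ‖eA x‖ = ‖Φ.symm (eT x)‖ := by rw [h3]
    _ = ‖(Φ.symm : (LinearMap.range γT) →L[ℂ] (LinearMap.range γA)) (eT x)‖ := rfl
    _ ≤ C * ‖eT x‖ := ContinuousLinearMap.le_opNorm _ _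
  have h4 : ‖A' x‖ ≤ ‖eA x‖ := by rw [hnormA]; exact le_max_right _ _
  have h5 : ‖eT x‖ ≤ ‖T' x‖ + ‖(x : H)‖ := by
    rw [hnormT]
    apply max_le <;> nlinarith [norm_nonneg (T' x), norm_nonneg ((x : H))]
  calc ‖A' x‖ ≤ C * ‖eT x‖ := le_trans h4 h2
  _ ≤ C * (‖T' x‖ + ‖(x : H)‖) := by
      exact mul_le_mul_of_nonneg_left h5 (hC ▸ norm_nonneg _)



/-- A densely defined operator `A` is self-adjoint. -/
def IsSelfAdjointPMap {H : Type*} [NormedAddCommGroup H] [InnerProductSpace ℂ H]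
    (A : H →ₗ.[ℂ] H) : Prop :=
  Dense (A.domain : Set H) ∧
  ∀ ψ χ : H, (ψ, χ) ∈ A.graph ↔
    ∀ (x : H) (hx : x ∈ A.domain), (inner ℂ ψ (A ⟨x, hx⟩) : ℂ) = (inner ℂ χ x : ℂ)


private lemma sa_surj {H : Type*} [NormedAddCommGroup H] [InnerProductSpace ℂ H] [CompleteSpace H]
    (A : H →ₗ.[ℂ] H) (hA : IsSelfAdjointPMap A)
    (hAc : IsClosed (A.graph : Set (H × H))) (σ : ℂ) (hσ : σ = Complex.I ∨ σ = -Complex.I) :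
    Function.Surjective (A.toFun + σ • A.domain.subtype) := by
  have hσc : (starRingEnd ℂ) σ = -σ := by rcases hσ with h | h <;> simp [h]
  have hσn : ‖σ‖ = 1 := by rcases hσ with h | h <;> simp [h]
  have hσ0 : σ ≠ 0 := by rcases hσ with h | h <;> simp [h, Complex.I_ne_zero]
  set f := A.toFun + σ • A.domain.subtype with hf
  have hfx : ∀ x : A.domain, f x = A.toFun x + σ • (x : H) := fun x => rfl
  -- symmetry
  have symA : ∀ x y : A.domain, (inner ℂ ((y : H)) (A.toFun x) : ℂ) = inner ℂ (A.toFun y) ((x : H)) := by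
    intro x y
    have hmem : ((y : H), A.toFun y) ∈ A.graph := A.mem_graph y
    have := ((hA.2 (y : H) (A.toFun y)).mp hmem) (x : H) x.2
    simpa using this
  have hreal : ∀ x : A.domain, (starRingEnd ℂ) (inner ℂ (A.toFun x) ((x:H)) : ℂ) = inner ℂ (A.toFun x) ((x:H)) := by
    intro x
    rw [inner_conj_symm]
    exact symA x x
  -- norm identity
  have nrm : ∀ x : A.domain, ‖f x‖ ^ 2 = ‖A.toFun x‖ ^ 2 + ‖(x : H)‖ ^ 2 := by
    intro x
    rw [hfx, @norm_add_sq ℂ]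
    have h1 : RCLike.re (inner ℂ (A.toFun x) (σ • (x:H)) : ℂ) = 0 := by
      rw [inner_smul_right]
      have him : (inner ℂ (A.toFun x) ((x:H)) : ℂ).im = 0 := by
        have := hreal x
        rw [Complex.conj_eq_iff_im] at this
        exact this
      rcases hσ with h | h <;>
        · simp [h, Complex.mul_re]
          exact him
    rw [h1]
    have h2 : ‖σ • (x : H)‖ = ‖(x : H)‖ := by
      rw [norm_smul, hσn, one_mul]
    rw [h2]
    ring
  have hlow : ∀ x : A.domain, ‖(x : H)‖ ≤ ‖f x‖ := by
    intro x
    have := nrm x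
    nlinarith [norm_nonneg (f x), norm_nonneg ((x : H)), norm_nonneg (A.toFun x)]
  -- the range is closed
  haveI : CompleteSpace A.graph := hAc.isComplete.completeSpace_coe
  let g : A.graph →ₗ[ℂ] H :=
    (LinearMap.snd ℂ H H + σ • LinearMap.fst ℂ H H).comp A.graph.subtype
  have hg : ∀ p : A.graph, g p = (p : H × H).2 + σ • (p : H × H).1 := fun p => rfl
  have hgmem : ∀ p : A.graph, ∃ x : A.domain, ((x : H), A.toFun x) = (p : H × H) := by
    intro p
    have := (A.mem_graph_iff').1 p.2
    exact this
  have hglow : ∀ p : A.graph, ‖p‖ ≤ ‖g p‖ := by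
    intro p
    obtain ⟨x, hx⟩ := hgmem p
    have h1 : ‖g p‖ = ‖f x‖ := by
      rw [hg, ← hx, hfx]
    have h2 : ‖p‖ = max ‖(x : H)‖ ‖A.toFun x‖ := by
      have : ‖p‖ = ‖(p : H × H)‖ := rfl
      rw [this, ← hx, Prod.norm_def]
    rw [h1, h2]
    have := nrm x
    rcases le_total ‖(x:H)‖ ‖A.toFun x‖ with h | h
    · rw [max_eq_right h]
      nlinarith [norm_nonneg (f x), norm_nonneg (A.toFun x)]
    · rw [max_eq_left h]
      nlinarith [norm_nonneg (f x), norm_nonneg ((x:H))]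
  have hgbd : ∀ p : A.graph, ‖g p‖ ≤ 2 * ‖p‖ := by
    intro p
    rw [hg]
    have h1 : ‖(p : H × H).2 + σ • (p : H × H).1‖ ≤ ‖(p : H × H).2‖ + ‖(p : H × H).1‖ := by
      refine le_trans (norm_add_le _ _) ?_
      rw [norm_smul, hσn, one_mul]
    have h2 : ‖(p : H × H).1‖ ≤ ‖p‖ := le_max_left _ _
    have h3 : ‖(p : H × H).2‖ ≤ ‖p‖ := le_max_right _ _
    linarith
  have hanti : AntilipschitzWith 1 g := by
    refine AddMonoidHomClass.antilipschitz_of_bound g ?_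
    intro p
    simpa using hglow p
  have hcont : UniformContinuous g :=
    (AddMonoidHomClass.lipschitz_of_bound g 2 hgbd).uniformContinuous
  have hcr : IsClosed (Set.range g) := hanti.isClosed_range hcont
  set K : Submodule ℂ H := LinearMap.range f with hK
  have hKrange : (K : Set H) = Set.range g := by
    ext y
    constructor
    · rintro ⟨x, rfl⟩
      exact ⟨⟨((x : H), A.toFun x), A.mem_graph x⟩, by rw [hg, hfx, add_comm]⟩
    · rintro ⟨p, rfl⟩
      obtain ⟨x, hx⟩ := hgmem p
      refine ⟨x, ?_⟩
      rw [hg, ← hx, hfx, add_comm]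
  have hKc : IsClosed (K : Set H) := by rw [hKrange]; exact hcr
  haveI : CompleteSpace K := hKc.isComplete.completeSpace_coe
  have horth : Kᗮ = ⊥ := by
    rw [Submodule.eq_bot_iff]
    intro ψ hψ
    rw [Submodule.mem_orthogonal] at hψ
    have h1 : ∀ x : A.domain, (inner ℂ ψ (f x) : ℂ) = 0 := by
      intro x
      have := hψ (f x) (LinearMap.mem_range_self f x)
      rw [← inner_conj_symm, this, map_zero]
    have h2 : ∀ (x : H) (hx : x ∈ A.domain),
        (inner ℂ ψ (A ⟨x, hx⟩) : ℂ) = (inner ℂ (σ • ψ) x : ℂ) := by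
      intro x hx
      show (inner ℂ ψ (A.toFun ⟨x, hx⟩) : ℂ) = (inner ℂ (σ • ψ) x : ℂ)
      have := h1 ⟨x, hx⟩
      rw [hfx, inner_add_right, inner_smul_right] at this
      rw [inner_smul_left, hσc]
      have : (inner ℂ ψ (A.toFun ⟨x, hx⟩) : ℂ) = -(σ * inner ℂ ψ (x : H)) := by
        linear_combination this
      rw [this]
      ring
    have hmem : (ψ, σ • ψ) ∈ A.graph := (hA.2 ψ (σ • ψ)).mpr h2
    obtain ⟨y, hy1⟩ := (A.mem_graph_iff').1 hmem
    have hy1' : (y : H) = ψ := congrArg Prod.fst hy1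
    have hy2' : A.toFun y = σ • ψ := congrArg Prod.snd hy1
    have e1 : (inner ℂ ((y:H)) (A.toFun y) : ℂ) = σ * inner ℂ ψ ψ := by
      rw [hy2', hy1', inner_smul_right]
    have e2 : (inner ℂ (A.toFun y) ((y:H)) : ℂ) = -σ * inner ℂ ψ ψ := by
      rw [hy2', hy1', inner_smul_left, hσc]
    have e3 := symA y y
    rw [e1, e2] at e3
    have h4 : σ * (inner ℂ ψ ψ : ℂ) = 0 := by linear_combination e3 / 2
    rcases mul_eq_zero.mp h4 with h | h
    · exact absurd h hσ0
    · exact inner_self_eq_zero.mp h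
  have hKtop : K = ⊤ := (Submodule.orthogonal_eq_bot_iff).mp horth
  rw [← LinearMap.range_eq_top]
  exact hKtop



set_option maxHeartbeats 1000000 in
/-- Wüst-type perturbation theorem: if `A` is self-adjoint, `B` is
symmetric and `A`-bounded, and `A + tB` (on `dom A`) is closed for all `t ∈ [0,1]`,
then `A + B` is self-adjoint on `dom A`. -/
theorem wuest_perturbation_theorem
    {H : Type*} [NormedAddCommGroup H] [InnerProductSpace ℂ H] [CompleteSpace H]
    (A B : H →ₗ.[ℂ] H)
    (hA : IsSelfAdjointPMap A)
    (hdom : A.domain ≤ B.domain)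
    (hBsym : ∀ x y : B.domain,
      (inner ℂ (B x) (y : H) : ℂ) = (inner ℂ (x : H) (B y) : ℂ))
    (a b : ℝ) (ha : 0 ≤ a) (hb : 0 ≤ b)
    (hbound : ∀ x : A.domain,
      ‖B ⟨(x : H), hdom x.2⟩‖ ≤ a * ‖A x‖ + b * ‖(x : H)‖)
    (hclosed : ∀ t ∈ Set.Icc (0 : ℝ) 1, IsClosed {p : H × H |
      ∃ hp : p.1 ∈ A.domain, p.2 = A ⟨p.1, hp⟩ + (t : ℂ) • B ⟨p.1, hdom hp⟩}) :
    ∀ C : H →ₗ.[ℂ] H,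
      (C.graph : Set (H × H)) = {p : H × H |
        ∃ hp : p.1 ∈ A.domain, p.2 = A ⟨p.1, hp⟩ + B ⟨p.1, hdom hp⟩} →
      IsSelfAdjointPMap C := by
  intro C hC
  set D := A.domain with hD
  set A' : D →ₗ[ℂ] H := A.toFun with hA'
  set B' : D →ₗ[ℂ] H := B.toFun.comp (Submodule.inclusion hdom) with hB'
  have hB'x : ∀ x : D, B' x = B ⟨(x : H), hdom x.2⟩ := fun x => rfl
  set T : ℝ → (D →ₗ[ℂ] H) := fun t => A' + ((t : ℝ) : ℂ) • B' with hT
  set f : ℝ → ℂ → (D →ₗ[ℂ] H) := fun t σ => T t + σ • D.subtype with hf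
  have hTx : ∀ (t : ℝ) (x : D), T t x = A' x + ((t : ℝ) : ℂ) • B' x := fun t x => rfl
  have hfx : ∀ (t : ℝ) (σ : ℂ) (x : D), f t σ x = T t x + σ • (x : H) := fun t σ x => rfl
  -- symmetry
  have symA : ∀ x y : D, (inner ℂ ((y : H)) (A' x) : ℂ) = inner ℂ (A' y) ((x : H)) := by
    intro x y
    have hmem : ((y : H), A' y) ∈ A.graph := A.mem_graph y
    have := ((hA.2 (y : H) (A' y)).mp hmem) (x : H) x.2
    exact this
  have symB : ∀ x y : D, (inner ℂ ((y : H)) (B' x) : ℂ) = inner ℂ (B' y) ((x : H)) := by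
    intro x y
    exact (hBsym (Submodule.inclusion hdom y) (Submodule.inclusion hdom x)).symm
  have symT : ∀ (t : ℝ) (x y : D),
      (inner ℂ ((y : H)) (T t x) : ℂ) = inner ℂ (T t y) ((x : H)) := by
    intro t x y
    rw [hTx, hTx, inner_add_right, inner_add_left, inner_smul_right, inner_smul_left,
      Complex.conj_ofReal, symA, symB]
  -- norm identity
  have nrmf : ∀ (t : ℝ) (σ : ℂ), (σ = Complex.I ∨ σ = -Complex.I) → ∀ x : D,
      ‖f t σ x‖ ^ 2 = ‖T t x‖ ^ 2 + ‖(x : H)‖ ^ 2 := by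
    intro t σ hσ x
    rw [hfx, @norm_add_sq ℂ]
    have hreal : (starRingEnd ℂ) (inner ℂ (T t x) ((x:H)) : ℂ) = inner ℂ (T t x) ((x:H)) := by
      rw [inner_conj_symm]; exact symT t x x
    have him : (inner ℂ (T t x) ((x:H)) : ℂ).im = 0 := Complex.conj_eq_iff_im.mp hreal
    have h1 : RCLike.re (inner ℂ (T t x) (σ • (x:H)) : ℂ) = 0 := by
      rw [inner_smul_right]
      rcases hσ with h | h <;>
      · simp [h, Complex.mul_re]
        exact him
    have hσn : ‖σ‖ = 1 := by rcases hσ with h | h <;> simp [h]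
    rw [h1, norm_smul, hσn, one_mul]
    ring
  have hlow : ∀ (t : ℝ) (σ : ℂ), (σ = Complex.I ∨ σ = -Complex.I) → ∀ x : D,
      ‖(x : H)‖ ≤ ‖f t σ x‖ ∧ ‖T t x‖ ≤ ‖f t σ x‖ := by
    intro t σ hσ x
    have := nrmf t σ hσ x
    constructor <;>
      nlinarith [norm_nonneg (f t σ x), norm_nonneg ((x : H)), norm_nonneg (T t x)]
  have hinj : ∀ (t : ℝ) (σ : ℂ), (σ = Complex.I ∨ σ = -Complex.I) →
      Function.Injective ⇑(f t σ) := by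
    intro t σ hσ x y hxy
    have h1 := (hlow t σ hσ (x - y)).1
    rw [map_sub, hxy, sub_self, norm_zero] at h1
    have h2 : ((x - y : D) : H) = 0 := norm_le_zero_iff.mp h1
    have : (x : H) = (y : H) := by
      have := sub_eq_zero.mp h2
      exact_mod_cast this
    exact Subtype.ext this
  -- closed graphs
  have hgraphT : ∀ t ∈ Set.Icc (0:ℝ) 1,
      ((LinearMap.range (D.subtype.prod (T t)) : Submodule ℂ (H × H)) : Set (H × H)) =
      {p : H × H | ∃ hp : p.1 ∈ A.domain, p.2 = A ⟨p.1, hp⟩ + (t : ℂ) • B ⟨p.1, hdom hp⟩} := by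
    intro t _
    ext p
    constructor
    · rintro ⟨x, rfl⟩
      exact ⟨x.2, rfl⟩
    · rintro ⟨hp, hp2⟩
      refine ⟨⟨p.1, hp⟩, ?_⟩
      have h2 : (D.subtype.prod (T t)) ⟨p.1, hp⟩ = (p.1, T t ⟨p.1, hp⟩) := rfl
      rw [h2, Prod.ext_iff]
      refine ⟨rfl, ?_⟩
      rw [hp2]
      rfl
  have hclosedT : ∀ t ∈ Set.Icc (0:ℝ) 1,
      IsClosed ((LinearMap.range (D.subtype.prod (T t)) : Submodule ℂ (H × H)) : Set (H × H)) := by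
    intro t ht
    rw [hgraphT t ht]
    exact hclosed t ht
  have hT0 : T 0 = A' := by
    ext x
    simp [hTx]
  have hclosedA : IsClosed ((LinearMap.range (D.subtype.prod A') : Submodule ℂ (H × H)) : Set (H × H)) := by
    rw [← hT0]
    exact hclosedT 0 (Set.left_mem_Icc.mpr zero_le_one)
  have hbound' : ∀ x : D, ‖B' x‖ ≤ a * ‖A' x‖ + b * ‖(x : H)‖ := fun x => hbound x
  -- relative bound K at each t
  have Kbound : ∀ t ∈ Set.Icc (0:ℝ) 1, ∃ K : ℝ, 1 ≤ K ∧
      ∀ σ : ℂ, (σ = Complex.I ∨ σ = -Complex.I) → ∀ x : D, ‖B' x‖ ≤ K * ‖f t σ x‖ := by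
    intro t ht
    have habs : |t| ≤ 1 := abs_le.mpr ⟨by linarith [ht.1], ht.2⟩
    have hbd : ∀ x : D, ‖T t x‖ ≤ (1 + a + b) * (‖A' x‖ + ‖(x : H)‖) := by
      intro x
      have h1 : ‖T t x‖ ≤ ‖A' x‖ + |t| * ‖B' x‖ := by
        rw [hTx]
        refine le_trans (norm_add_le _ _) ?_
        rw [norm_smul, Complex.norm_real, Real.norm_eq_abs]
      have h2 := hbound' x
      have h3 : |t| * ‖B' x‖ ≤ ‖B' x‖ := by
        nlinarith [norm_nonneg (B' x), abs_nonneg t]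
      nlinarith [norm_nonneg (A' x), norm_nonneg ((x:H))]
    obtain ⟨Cr, hCr0, hCrb⟩ := graph_norm_bound A' (T t) (1 + a + b)
      (by linarith) hbd hclosedA (hclosedT t ht)
    refine ⟨2 * a * Cr + b + 1, by nlinarith [mul_nonneg ha hCr0], ?_⟩
    intro σ hσ x
    have h1 := hCrb x
    have h2 := (hlow t σ hσ x).1
    have h3 := (hlow t σ hσ x).2
    have h4 := hbound' x
    calc ‖B' x‖ ≤ a * ‖A' x‖ + b * ‖(x:H)‖ := h4
    _ ≤ a * (Cr * (‖T t x‖ + ‖(x:H)‖)) + b * ‖(x:H)‖ := by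
        have := mul_le_mul_of_nonneg_left h1 ha
        linarith
    _ ≤ a * (Cr * (‖f t σ x‖ + ‖f t σ x‖)) + b * ‖f t σ x‖ := by
        have e1 : Cr * (‖T t x‖ + ‖(x:H)‖) ≤ Cr * (‖f t σ x‖ + ‖f t σ x‖) :=
          mul_le_mul_of_nonneg_left (by linarith) hCr0
        have e2 := mul_le_mul_of_nonneg_left e1 ha
        have e3 := mul_le_mul_of_nonneg_left h2 hb
        exact add_le_add e2 e3
    _ = (2 * a * Cr + b) * ‖f t σ x‖ := by ring
    _ ≤ (2 * a * Cr + b + 1) * ‖f t σ x‖ := by nlinarith [norm_nonneg (f t σ x)]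
  -- pointwise relation between f at different parameters
  have hfdiff : ∀ (s t : ℝ) (σ : ℂ),
      f t σ = f s σ + (((t : ℂ) - (s : ℂ)) • B') := by
    intro s t σ
    ext x
    have hre : (((t : ℂ) - (s : ℂ)) • B') x = ((t:ℂ) - (s:ℂ)) • B' x := rfl
    simp only [LinearMap.add_apply, hre, hfx, hTx]
    rw [sub_smul]
    abel
  -- one-direction perturbation step
  have hstep : ∀ (s t : ℝ) (K : ℝ), 0 ≤ K →
      ∀ σ : ℂ, (σ = Complex.I ∨ σ = -Complex.I) →
      (∀ x : D, ‖B' x‖ ≤ K * ‖f s σ x‖) → |t - s| * K < 1 →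
      Function.Surjective ⇑(f s σ) → Function.Surjective ⇑(f t σ) := by
    intro s t K hK0 σ hσ hKb hlt hsurj
    have hbij : Function.Bijective ⇑(f s σ) := ⟨hinj s σ hσ, hsurj⟩
    have hS : ∀ x : D, ‖((((t : ℂ) - (s : ℂ)) • B') x)‖ ≤ (|t - s| * K) * ‖f s σ x‖ := by
      intro x
      rw [LinearMap.smul_apply, norm_smul, ← Complex.ofReal_sub, Complex.norm_real,
        Real.norm_eq_abs]
      rw [mul_assoc]
      exact mul_le_mul_of_nonneg_left (hKb x) (abs_nonneg _)
    have := core_surj (f s σ) ((((t : ℂ) - (s : ℂ))) • B')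
      (mul_nonneg (abs_nonneg _) hK0) hlt hbij hS
    rwa [← hfdiff s t σ] at this
  -- local constancy of membership in M
  set M : Set ℝ := {t : ℝ | Function.Surjective ⇑(f t Complex.I) ∧
    Function.Surjective ⇑(f t (-Complex.I))} with hM
  have hloc : ∀ s ∈ Set.Icc (0:ℝ) 1, ∃ ε > 0, ∀ t ∈ Set.Icc (0:ℝ) 1,
      |t - s| < ε → (s ∈ M ↔ t ∈ M) := by
    intro s hs
    obtain ⟨K, hK1, hKb⟩ := Kbound s hs
    have hK0 : (0:ℝ) ≤ K := by linarith
    refine ⟨1 / (2 * K), by positivity, ?_⟩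
    intro t _ htε
    have hKts : |t - s| * K < 1 := by
      have h2 : |t - s| * K < (1 / (2 * K)) * K := by
        apply mul_lt_mul_of_pos_right htε
        linarith
      have h3 : (1 / (2 * K)) * K = 1 / 2 := by
        field_simp
      linarith
    have hKbt : ∀ σ : ℂ, (σ = Complex.I ∨ σ = -Complex.I) →
        ∀ x : D, ‖B' x‖ ≤ (2 * K) * ‖f t σ x‖ := by
      intro σ hσ x
      have h1 : f s σ x = f t σ x + (((s : ℂ) - (t : ℂ)) • B') x := by
        rw [← LinearMap.add_apply, ← hfdiff t s σ]
      have h2 : ‖f s σ x‖ ≤ ‖f t σ x‖ + |s - t| * ‖B' x‖ := by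
        rw [h1]
        refine le_trans (norm_add_le _ _) ?_
        rw [LinearMap.smul_apply, norm_smul, ← Complex.ofReal_sub, Complex.norm_real,
          Real.norm_eq_abs]
      have h3 := hKb σ hσ x
      have h4 : |s - t| = |t - s| := abs_sub_comm s t
      have h5 : |t - s| * K ≤ 1 / 2 := by
        have h6 : |t - s| * K ≤ (1 / (2 * K)) * K := by
          apply mul_le_mul_of_nonneg_right (le_of_lt htε) hK0
        have h7 : (1 / (2 * K)) * K = 1 / 2 := by field_simp
        linarith
      rw [h4] at h2
      -- ‖B'x‖ ≤ K‖fsσx‖ ≤ K‖ftσx‖ + K|t−s|‖B'x‖ ≤ K‖ftσx‖ + (1/2)‖B'x‖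
      nlinarith [norm_nonneg (B' x), norm_nonneg (f t σ x), norm_nonneg (f s σ x),
        mul_le_mul_of_nonneg_left h2 hK0,
        mul_le_mul_of_nonneg_right h5 (norm_nonneg (B' x))]
    constructor
    · rintro ⟨h1, h2⟩
      exact ⟨hstep s t K hK0 Complex.I (Or.inl rfl) (hKb _ (Or.inl rfl)) hKts h1,
        hstep s t K hK0 (-Complex.I) (Or.inr rfl) (hKb _ (Or.inr rfl)) hKts h2⟩
    · rintro ⟨h1, h2⟩
      have hlt2 : |s - t| * (2 * K) < 1 := by
        rw [abs_sub_comm]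
        have : |t - s| * (2 * K) < (1 / (2 * K)) * (2 * K) := by
          apply mul_lt_mul_of_pos_right htε
          linarith
        have h7 : (1 / (2 * K)) * (2 * K) = 1 := by field_simp
        linarith
      exact ⟨hstep t s (2 * K) (by linarith) Complex.I (Or.inl rfl)
          (hKbt _ (Or.inl rfl)) hlt2 h1,
        hstep t s (2 * K) (by linarith) (-Complex.I) (Or.inr rfl)
          (hKbt _ (Or.inr rfl)) hlt2 h2⟩
  -- closedness of the graph of A
  have hAgraphclosed : IsClosed (A.graph : Set (H × H)) := by
    have h0 : ((LinearMap.range (D.subtype.prod A') : Submodule ℂ (H × H)) : Set (H × H)) =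
        (A.graph : Set (H × H)) := by
      ext p
      constructor
      · rintro ⟨x, rfl⟩
        exact A.mem_graph x
      · intro hp
        obtain ⟨x, hx⟩ := A.mem_graph_iff'.1 hp
        exact ⟨x, hx⟩
    rw [← h0]
    exact hclosedA
  have hf0 : ∀ σ : ℂ, f 0 σ = A.toFun + σ • D.subtype := by
    intro σ
    show T 0 + σ • D.subtype = _
    rw [hT0]
  have h0M : (0:ℝ) ∈ M := by
    constructor
    · rw [hf0]
      exact sa_surj A hA hAgraphclosed _ (Or.inl rfl)
    · rw [hf0]
      exact sa_surj A hA hAgraphclosed _ (Or.inr rfl)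
  -- the connectedness (sup) argument: 1 ∈ M
  have h1M : (1:ℝ) ∈ M := by
    set Mc := M ∩ Set.Icc (0:ℝ) 1 with hMc
    have hne : Mc.Nonempty := ⟨0, h0M, Set.left_mem_Icc.mpr zero_le_one⟩
    have hbdd : BddAbove Mc := BddAbove.mono Set.inter_subset_right bddAbove_Icc
    set c := sSup Mc with hc
    have hc0 : 0 ≤ c := le_csSup hbdd ⟨h0M, Set.left_mem_Icc.mpr zero_le_one⟩
    have hc1 : c ≤ 1 := csSup_le hne (fun x hx => hx.2.2)
    have hcIcc : c ∈ Set.Icc (0:ℝ) 1 := ⟨hc0, hc1⟩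
    obtain ⟨ε, hε, hloc_c⟩ := hloc c hcIcc
    have hcM : c ∈ M := by
      obtain ⟨u, huMc, hu⟩ := exists_lt_of_lt_csSup hne (show c - ε < c by linarith)
      have huc : u ≤ c := le_csSup hbdd huMc
      have habs : |u - c| < ε := by
        rw [abs_sub_lt_iff]
        constructor <;> linarith
      exact (hloc_c u huMc.2 habs).mpr huMc.1
    by_cases h : c = 1
    · exact h ▸ hcM
    · exfalso
      have hclt : c < 1 := lt_of_le_of_ne hc1 h
      set t := min 1 (c + ε/2) with ht
      have h1 : c < t := lt_min hclt (by linarith)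
      have htI : t ∈ Set.Icc (0:ℝ) 1 := ⟨le_min zero_le_one (by linarith), min_le_left _ _⟩
      have htc : |t - c| < ε := by
        have h2 : t ≤ c + ε/2 := min_le_right _ _
        rw [abs_sub_lt_iff]
        constructor <;> linarith
      have htM : t ∈ M := (hloc_c t htI htc).mp hcM
      have : t ≤ c := le_csSup hbdd ⟨htM, htI⟩
      linarith
  obtain ⟨hsurjI, hsurjmI⟩ := h1M
  have hT1x : ∀ x : D, T 1 x = A' x + B' x := by
    intro x
    rw [hTx]
    norm_num
  have hCgraph : ∀ ψ χ : H, ((ψ, χ) ∈ C.graph) ↔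
      ∃ hp : ψ ∈ D, χ = A ⟨ψ, hp⟩ + B ⟨ψ, hdom hp⟩ := by
    intro ψ χ
    rw [← SetLike.mem_coe, hC]
    exact Iff.rfl
  have hgraphT1 : ∀ ψ χ : H, ((ψ, χ) ∈ C.graph) ↔ ∃ hp : ψ ∈ D, χ = T 1 ⟨ψ, hp⟩ := by
    intro ψ χ
    rw [hCgraph]
    constructor
    · rintro ⟨hp, hχ⟩
      refine ⟨hp, ?_⟩
      rw [hχ]
      exact (hT1x ⟨ψ, hp⟩).symm
    · rintro ⟨hp, hχ⟩
      refine ⟨hp, ?_⟩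
      rw [hχ]
      exact hT1x ⟨ψ, hp⟩
  have hdomC : ∀ x : H, x ∈ C.domain ↔ x ∈ D := by
    intro x
    rw [LinearPMap.mem_domain_iff]
    constructor
    · rintro ⟨y, hy⟩
      obtain ⟨hp, _⟩ := (hgraphT1 x y).1 hy
      exact hp
    · intro hx
      exact ⟨T 1 ⟨x, hx⟩, (hgraphT1 x _).2 ⟨hx, rfl⟩⟩
  constructor
  · have : (C.domain : Set H) = (D : Set H) := Set.ext fun x => hdomC x
    rw [this]
    exact hA.1
  · intro ψ χ
    constructor
    · intro hmem x hx
      obtain ⟨hp, hχ⟩ := (hgraphT1 ψ χ).1 hmem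
      have hx' : x ∈ D := (hdomC x).1 hx
      have hCx : C ⟨x, hx⟩ = T 1 ⟨x, hx'⟩ := by
        obtain ⟨hp2, h2⟩ := (hgraphT1 x (C ⟨x, hx⟩)).1 (C.mem_graph ⟨x, hx⟩)
        exact h2
      rw [hCx, hχ]
      exact symT 1 ⟨x, hx'⟩ ⟨ψ, hp⟩
    · intro h
      have h' : ∀ x : D, (inner ℂ ψ (T 1 x) : ℂ) = inner ℂ χ (x : H) := by
        intro x
        have hx : (x : H) ∈ C.domain := (hdomC _).2 x.2
        have hCx : C ⟨(x : H), hx⟩ = T 1 x := by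
          obtain ⟨hp2, h2⟩ := (hgraphT1 (x : H) _).1 (C.mem_graph ⟨(x : H), hx⟩)
          exact h2
        have := h (x : H) hx
        rwa [hCx] at this
      obtain ⟨u, hu⟩ := hsurjmI (χ - Complex.I • ψ)
      have hu' : T 1 u - Complex.I • (u : H) = χ - Complex.I • ψ := by
        rw [← hu, hfx, neg_smul, ← sub_eq_add_neg]
      have hχ2 : χ = T 1 u - Complex.I • ((u : D) : H) + Complex.I • ψ :=
        sub_eq_iff_eq_add.mp hu'.symm
      have hψu : ψ = (u : H) := by
        have key : ∀ x : D, (inner ℂ (ψ - (u : H)) (f 1 Complex.I x) : ℂ) = 0 := by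
          intro x
          rw [hfx, inner_sub_left, inner_add_right, inner_add_right,
            inner_smul_right, inner_smul_right]
          have e1 : (inner ℂ ψ (T 1 x) : ℂ) = inner ℂ χ ((x : H)) := h' x
          have e2 : (inner ℂ ((u : H)) (T 1 x) : ℂ) = inner ℂ (T 1 u) ((x : H)) := symT 1 x u
          have e3 : (inner ℂ χ ((x : H)) : ℂ) = inner ℂ (T 1 u) ((x : H))
              + Complex.I * inner ℂ ((u : H)) ((x : H)) - Complex.I * inner ℂ ψ ((x : H)) := by
            rw [hχ2, inner_add_left, inner_sub_left, inner_smul_left, inner_smul_left,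
              Complex.conj_I]
            ring
          linear_combination e1 + e3 - e2
        have hall : ∀ y : H, (inner ℂ (ψ - (u : H)) y : ℂ) = 0 := by
          intro y
          obtain ⟨x, hx⟩ := hsurjI y
          rw [← hx]
          exact key x
        have h0 := hall (ψ - (u : H))
        rw [inner_self_eq_zero] at h0
        exact sub_eq_zero.mp h0
      have hψD : ψ ∈ D := by rw [hψu]; exact u.2
      have hχ3 : χ = T 1 u := by
        rw [hχ2, hψu]
        abel
      refine (hgraphT1 ψ χ).2 ⟨hψD, ?_⟩
      rw [hχ3]
      congr 1
      exact Subtype.ext hψu.symm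


end
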